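/- If Φ is a bounded inductive definition, then the smallest Φ-closed class I(Φ) is a set: there exists a set S such that for every set x, x ∈ S if and only if x belongs to I(Φ). -/

import Mathlib

/-- A class `I` (of ZF-sets) is closed under the inductive definition `Φ`
(a binary class relation on sets): whenever `Φ X x` holds and `X ⊆ I`,
then `x ∈ I`. -/
def ClosedUnder (Φ : ZFSet → ZFSet → Prop) (I : ZFSet → Prop) : Prop :=
  ∀ X x : ZFSet, Φ X x → (∀ y ∈ X, I y) → I x

/-- The smallest `Φ`-closed class `I(Φ)`: the intersection of all `Φ`-closed
classes. -/
def IClass (Φ : ZFSet → ZFSet → Prop) (x : ZFSet) : Prop :=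
  ∀ J : ZFSet → Prop, ClosedUnder Φ J → J x

/-- `f` is a (set-)function from `Y` onto `X`: a functional set of ordered pairs
with domain `Y`, all of whose values lie in `X`, and every element of `X` is a
value. -/
def IsFunOnto (f Y X : ZFSet) : Prop :=
  (∀ w ∈ f, ∃ u v : ZFSet, w = ZFSet.pair u v) ∧
  (∀ u v : ZFSet, ZFSet.pair u v ∈ f → u ∈ Y ∧ v ∈ X) ∧
  (∀ u ∈ Y, ∃ v : ZFSet, ZFSet.pair u v ∈ f) ∧
  (∀ u v w : ZFSet, ZFSet.pair u v ∈ f → ZFSet.pair u w ∈ f → v = w) ∧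
  (∀ v ∈ X, ∃ u : ZFSet, ZFSet.pair u v ∈ f)

/-- The inductive definition `Φ` is bounded: (a) for every set `X` the class
`{x : Φ X x}` is a set; (b) there is a set `B` (a bound) such that whenever
`Φ X x` holds, `X` is an image of some `Y ∈ B`. -/
def BoundedID (Φ : ZFSet → ZFSet → Prop) : Prop :=
  (∀ X : ZFSet, ∃ s : ZFSet, ∀ x : ZFSet, x ∈ s ↔ Φ X x) ∧
  (∃ B : ZFSet, ∀ X x : ZFSet, Φ X x →
    ∃ Y : ZFSet, Y ∈ B ∧ ∃ f : ZFSet, IsFunOnto f Y X)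

universe u

open Cardinal Ordinal

/-- One step of the inductive definition, as a class operator. -/
def Gam (Φ : ZFSet.{u} → ZFSet.{u} → Prop) (C : Set ZFSet.{u}) : Set ZFSet :=
  {x | ∃ X : ZFSet, (∀ y ∈ X, y ∈ C) ∧ Φ X x}

theorem Gam_mono (Φ : ZFSet.{u} → ZFSet.{u} → Prop) {C D : Set ZFSet.{u}} (h : C ⊆ D) :
    Gam Φ C ⊆ Gam Φ D := by
  rintro x ⟨X, hX, hx⟩
  exact ⟨X, fun y hy => h (hX y hy), hx⟩

/-- Transfinite iteration of `Gam`. -/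
noncomputable def Wc (Φ : ZFSet.{u} → ZFSet.{u} → Prop) (α : Ordinal.{u}) : Set ZFSet :=
  ⋃ β : Set.Iio α, Gam Φ (Wc Φ β.1)
termination_by α
decreasing_by exact β.2

theorem mem_Wc (Φ : ZFSet.{u} → ZFSet.{u} → Prop) {α : Ordinal.{u}} {x : ZFSet} :
    x ∈ Wc Φ α ↔ ∃ β < α, x ∈ Gam Φ (Wc Φ β) := by
  rw [Wc]
  simp only [Set.mem_iUnion]
  constructor
  · rintro ⟨⟨β, hβ⟩, hx⟩; exact ⟨β, hβ, hx⟩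
  · rintro ⟨β, hβ, hx⟩; exact ⟨⟨β, hβ⟩, hx⟩

theorem Wc_mono (Φ : ZFSet.{u} → ZFSet.{u} → Prop) {α α' : Ordinal.{u}} (h : α ≤ α') :
    Wc Φ α ⊆ Wc Φ α' := by
  intro x hx
  rw [mem_Wc] at hx ⊢
  obtain ⟨β, hβ, hx⟩ := hx
  exact ⟨β, hβ.trans_le h, hx⟩

theorem iclass_closed (Φ : ZFSet.{u} → ZFSet.{u} → Prop) : ClosedUnder Φ (IClass Φ) :=
  fun X x hΦ hX J hJ => hJ X x hΦ fun y hy => hX y hy J hJ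

theorem wc_sub_iclass (Φ : ZFSet.{u} → ZFSet.{u} → Prop) (α : Ordinal.{u}) :
    ∀ x ∈ Wc Φ α, IClass Φ x := by
  induction α using Ordinal.induction with
  | h α IH =>
    intro x hx
    rw [mem_Wc] at hx
    obtain ⟨β, hβ, X, hX, hΦ⟩ := hx
    exact iclass_closed Φ X x hΦ fun y hy => IH β hβ y (hX y hy)

/-- Each stage of the iteration is (extensionally) a ZF-set. -/
theorem wc_isSet (Φ : ZFSet.{u} → ZFSet.{u} → Prop)
    (hset : ∀ X : ZFSet, ∃ s : ZFSet, ∀ x : ZFSet, x ∈ s ↔ Φ X x)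
    (α : Ordinal.{u}) : ∃ T : ZFSet, ∀ x : ZFSet, x ∈ T ↔ x ∈ Wc Φ α := by
  induction α using Ordinal.induction with
  | h α IH =>
    choose ps hps using hset
    have IH' : ∀ β : Set.Iio α, ∃ T : ZFSet, ∀ x : ZFSet, x ∈ T ↔ x ∈ Wc Φ β.1 :=
      fun β => IH β.1 β.2
    choose g hg using IH'
    classical
    haveI : ZFSet.Definable₁ ps := Classical.allZFSetDefinable _
    refine ⟨ZFSet.sUnion (ZFSet.range (fun i : Shrink (Set.Iio α) =>
      ZFSet.sUnion (ZFSet.image ps (ZFSet.powerset (g ((equivShrink (Set.Iio α)).symm i)))))), ?_⟩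
    intro x
    rw [ZFSet.mem_sUnion, mem_Wc]
    constructor
    · rintro ⟨t, ht, hxt⟩
      rw [ZFSet.mem_range] at ht
      obtain ⟨i, rfl⟩ := ht
      set β := (equivShrink (Set.Iio α)).symm i with hβ
      rw [ZFSet.mem_sUnion] at hxt
      obtain ⟨s, hs, hxs⟩ := hxt
      rw [ZFSet.mem_image] at hs
      obtain ⟨X, hXpow, rfl⟩ := hs
      rw [ZFSet.mem_powerset] at hXpow
      refine ⟨β.1, β.2, X, fun y hy => ?_, (hps X x).1 hxs⟩
      exact (hg β y).1 (hXpow hy)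
    · rintro ⟨β, hβ, X, hX, hΦ⟩
      refine ⟨_, (ZFSet.mem_range).2 ⟨equivShrink (Set.Iio α) ⟨β, hβ⟩, rfl⟩, ?_⟩
      rw [ZFSet.mem_sUnion]
      refine ⟨ps X, ?_, (hps X x).2 hΦ⟩
      rw [ZFSet.mem_image]
      refine ⟨X, ?_, rfl⟩
      rw [ZFSet.mem_powerset]
      intro y hy
      have := hX y hy
      simp only [Equiv.symm_apply_apply] at *
      exact (hg _ y).2 (by simpa using this)

instance small_toSet' (x : ZFSet.{u}) : Small.{u} x.toSet := ZFSet.small_coe x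

/-- If `Φ` is a bounded inductive definition, then the smallest `Φ`-closed class
`I(Φ)` is a set: there is a set `S` whose elements are exactly the members of
`I(Φ)`. -/
theorem bounded_IClass_isSet (Φ : ZFSet → ZFSet → Prop) (h : BoundedID Φ) :
    ∃ S : ZFSet, ∀ x : ZFSet, x ∈ S ↔ IClass Φ x := by
  classical
  obtain ⟨hset, B, hB⟩ := h
  let bc := fun Y : ZFSet => #(Shrink Y.toSet)
  let μ := ⨆ i : Shrink B.toSet, bc ((equivShrink B.toSet).symm i : B.toSet)
  let κc := Order.succ (max μ ℵ₀)
  have hκreg : κc.IsRegular := Cardinal.isRegular_succ (le_max_right _ _)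
  have hℵ : ℵ₀ ≤ κc := (le_max_right μ ℵ₀).trans (Order.le_succ _)
  set κ := κc.ord with hκ
  have hκlim : Order.IsSuccLimit κ := Cardinal.isSuccLimit_ord hℵ
  have hclosed : ClosedUnder Φ (· ∈ Wc Φ κ) := by
    intro X x hΦ hX
    obtain ⟨Y, hYB, f, _, hf2, hf3, hf4, hf5⟩ := hB X x hΦ
    -- a surjection from `Y.toSet` onto `X.toSet`
    choose v hv using hf3
    let σ : Y.toSet → X.toSet := fun u => ⟨v u.1 u.2, (hf2 _ _ (hv u.1 u.2)).2⟩
    have hσ : Function.Surjective σ := by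
      rintro ⟨w, hw⟩
      obtain ⟨u, hu⟩ := hf5 w hw
      have huY : u ∈ Y := (hf2 _ _ hu).1
      exact ⟨⟨u, huY⟩, Subtype.ext (hf4 u (v u huY) w (hv u huY) hu)⟩
    have hcard : #(Shrink X.toSet) ≤ bc Y := by
      refine Cardinal.mk_le_of_surjective (f := (equivShrink X.toSet) ∘ σ ∘
        (equivShrink Y.toSet).symm) ?_
      exact (equivShrink X.toSet).surjective.comp (hσ.comp (equivShrink Y.toSet).symm.surjective)
    have hbcY : bc Y ≤ μ := by
      have := le_ciSup (Cardinal.bddAbove_range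
        (fun i : Shrink B.toSet => bc ((equivShrink B.toSet).symm i : B.toSet)))
        (equivShrink B.toSet ⟨Y, hYB⟩)
      simpa using this
    have hcardκ : #(Shrink X.toSet) < κc :=
      lt_of_le_of_lt (hcard.trans (hbcY.trans (le_max_left _ _))) (Order.lt_succ _)
    have hst : ∀ i : Shrink X.toSet, ∃ β, β < κ ∧
        (((equivShrink X.toSet).symm i : ZFSet)) ∈ Gam Φ (Wc Φ β) := by
      intro i
      have hm : (((equivShrink X.toSet).symm i : X.toSet) : ZFSet) ∈ Wc Φ κ :=
        hX _ ((equivShrink X.toSet).symm i).2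
      rw [mem_Wc] at hm
      obtain ⟨β, hβ, hmem⟩ := hm
      exact ⟨β, hβ, hmem⟩
    choose βf hβlt hβmem using hst
    have hsup : (⨆ i, βf i) < κ :=
      Cardinal.iSup_lt_ord_of_isRegular hκreg hcardκ hβlt
    have hγ : Order.succ (⨆ i, βf i) < κ := hκlim.succ_lt hsup
    have hXγ : ∀ y ∈ X, y ∈ Wc Φ (Order.succ (⨆ i, βf i)) := by
      intro y hy
      have hmem := hβmem (equivShrink X.toSet ⟨y, hy⟩)
      simp only [Equiv.symm_apply_apply] at hmem
      rw [mem_Wc]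
      refine ⟨βf (equivShrink X.toSet ⟨y, hy⟩), ?_, hmem⟩
      exact (le_ciSup (Ordinal.bddAbove_range _) _).trans_lt (Order.lt_succ _)
    exact (mem_Wc Φ).2 ⟨_, hγ, X, hXγ, hΦ⟩
  obtain ⟨T, hT⟩ := wc_isSet Φ hset κ
  refine ⟨T, fun x => ⟨fun hx => wc_sub_iclass Φ κ x ((hT x).1 hx), fun hx => ?_⟩⟩
  exact hx (· ∈ T) fun X y hΦ hXs =>
    (hT y).2 (hclosed X y hΦ fun z hz => (hT z).1 (hXs z hz))
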